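/- If the stability support of (y,A) is positive (i.e. every sufficiently small perturbation of (y,A) yields LASSO solutions with the same support), then the unconstrained LASSO problem with input (y,A) has exactly one minimiser. -/

import Mathlib

open Matrix BigOperators

noncomputable def lassoObj {m N : ℕ} (lam : ℝ) (y : Fin m → ℝ)
    (A : Matrix (Fin m) (Fin N) ℝ) (x : Fin N → ℝ) : ℝ :=
  (∑ i, (A.mulVec x i - y i) ^ 2) + lam * ∑ j, |x j|

def lassoSol {m N : ℕ} (lam : ℝ) (y : Fin m → ℝ)
    (A : Matrix (Fin m) (Fin N) ℝ) : Set (Fin N → ℝ) :=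
  {x | ∀ z, lassoObj lam y A x ≤ lassoObj lam y A z}

/-- The stability support: the distance to support change. -/
noncomputable def stsp {m N : ℕ} (lam : ℝ) (y : Fin m → ℝ)
    (A : Matrix (Fin m) (Fin N) ℝ) : ℝ :=
  sInf {δ : ℝ | 0 ≤ δ ∧
    ∃ (yt : Fin m → ℝ) (At : Matrix (Fin m) (Fin N) ℝ)
      (x xt : Fin N → ℝ), x ∈ lassoSol lam y A ∧ xt ∈ lassoSol lam yt At ∧
      (∀ i, |yt i - y i| ≤ δ) ∧ (∀ i j, |A i j - At i j| ≤ δ) ∧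
      Function.support x ≠ Function.support xt}

private lemma sign_mul_self_abs (a : ℝ) : Real.sign a * a = |a| := by
  rcases lt_trichotomy a 0 with h|h|h
  · rw [Real.sign_of_neg h, abs_of_neg h]; ring
  · simp [h]
  · rw [Real.sign_of_pos h, abs_of_pos h]; ring

/-- If the stability support is positive then the LASSO problem has exactly one
minimiser. -/
theorem lasso_pos_stsp_unique_minimiser {m N : ℕ} (lam : ℝ) (hlam : 0 < lam)
    (y : Fin m → ℝ) (A : Matrix (Fin m) (Fin N) ℝ)
    (h : 0 < stsp lam y A) :
    ∃ x : Fin N → ℝ, lassoSol lam y A = {x} := by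
  unfold stsp at h
  set S : Set ℝ := {δ : ℝ | 0 ≤ δ ∧
    ∃ (yt : Fin m → ℝ) (At : Matrix (Fin m) (Fin N) ℝ)
      (x xt : Fin N → ℝ), x ∈ lassoSol lam y A ∧ xt ∈ lassoSol lam yt At ∧
      (∀ i, |yt i - y i| ≤ δ) ∧ (∀ i j, |A i j - At i j| ≤ δ) ∧
      Function.support x ≠ Function.support xt} with hSdef
  have hSne : S.Nonempty := by
    by_contra hc
    rw [Set.not_nonempty_iff_eq_empty] at hc
    rw [hc, Real.sInf_empty] at h
    exact lt_irrefl 0 h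
  have h0 : (0:ℝ) ∉ S := by
    intro hc
    have hb : BddBelow S := ⟨0, fun a ha => ha.1⟩
    have := csInf_le hb hc
    linarith
  -- all solutions have the same support
  have hsupp : ∀ u ∈ lassoSol lam y A, ∀ v ∈ lassoSol lam y A,
      Function.support u = Function.support v := by
    intro u hu v hv
    by_contra hne
    exact h0 ⟨le_refl 0, y, A, u, v, hu, hv, fun i => by simp, fun i j => by simp, hne⟩
  -- extract a solution
  obtain ⟨δ, hδ⟩ := hSne
  obtain ⟨-, yt, At, x₀, xt, hx₀, -⟩ := hδ
  refine ⟨x₀, Set.eq_singleton_iff_unique_mem.mpr ⟨hx₀, ?_⟩⟩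
  intro x' hx'
  by_contra hne'
  -- basic facts
  have objeq : lassoObj lam y A x' = lassoObj lam y A x₀ := le_antisymm (hx' x₀) (hx₀ x')
  have hss := hsupp x₀ hx₀ x' hx'
  have hsupp' : ∀ j, (x₀ j = 0 ↔ x' j = 0) := by
    intro j
    have hiff := Set.ext_iff.mp hss j
    simp only [Function.mem_support] at hiff
    constructor
    · intro hz; by_contra hc; exact (hiff.mpr hc) hz
    · intro hz; by_contra hc; exact (hiff.mp hc) hz
  -- equal data fidelity: A x' = A x₀
  have Aeq : A.mulVec x' = A.mulVec x₀ := by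
    have hmv : ∀ i, A.mulVec (fun j => (x₀ j + x' j)/2) i
        = (A.mulVec x₀ i + A.mulVec x' i)/2 := by
      intro i
      simp only [Matrix.mulVec, dotProduct]
      have hrw : ∀ j ∈ Finset.univ, A i j * ((x₀ j + x' j)/2)
          = (A i j * x₀ j + A i j * x' j)/2 := fun j _ => by ring
      rw [Finset.sum_congr rfl hrw, ← Finset.sum_div, Finset.sum_add_distrib]
    have hmid := hx₀ (fun j => (x₀ j + x' j)/2)
    have e1 : lassoObj lam y A (fun j => (x₀ j + x' j)/2)
        = ∑ i, ((A.mulVec x₀ i + A.mulVec x' i)/2 - y i)^2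
          + lam * ∑ j, |(x₀ j + x' j)/2| := by
      unfold lassoObj
      simp only [hmv]
    have e2 : ∀ i, ((A.mulVec x₀ i + A.mulVec x' i)/2 - y i)^2
        = ((A.mulVec x₀ i - y i)^2 + (A.mulVec x' i - y i)^2)/2
          - (A.mulVec x₀ i - A.mulVec x' i)^2/4 := fun i => by ring
    have e3 : ∑ i, ((A.mulVec x₀ i + A.mulVec x' i)/2 - y i)^2
        = (∑ i, (A.mulVec x₀ i - y i)^2 + ∑ i, (A.mulVec x' i - y i)^2)/2
          - (∑ i, (A.mulVec x₀ i - A.mulVec x' i)^2)/4 := by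
      simp only [e2]
      rw [Finset.sum_sub_distrib, ← Finset.sum_div, ← Finset.sum_div,
        Finset.sum_add_distrib]
    have e4 : ∑ j, |(x₀ j + x' j)/2| ≤ (∑ j, |x₀ j| + ∑ j, |x' j|)/2 := by
      have hper : ∀ j ∈ Finset.univ, |(x₀ j + x' j)/2| ≤ (|x₀ j| + |x' j|)/2 := by
        intro j _
        have habs2 : |(x₀ j + x' j)/2| = |x₀ j + x' j|/2 := by
          rw [abs_div]; norm_num
        rw [habs2]
        linarith [abs_add_le (x₀ j) (x' j)]
      calc ∑ j, |(x₀ j + x' j)/2| ≤ ∑ j, ((|x₀ j| + |x' j|)/2) :=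
            Finset.sum_le_sum hper
        _ = (∑ j, |x₀ j| + ∑ j, |x' j|)/2 := by
            rw [← Finset.sum_div, Finset.sum_add_distrib]
    have e5 : lam * ∑ j, |(x₀ j + x' j)/2|
        ≤ (lam * ∑ j, |x₀ j| + lam * ∑ j, |x' j|)/2 := by
      calc lam * ∑ j, |(x₀ j + x' j)/2|
          ≤ lam * ((∑ j, |x₀ j| + ∑ j, |x' j|)/2) :=
            mul_le_mul_of_nonneg_left e4 (le_of_lt hlam)
        _ = (lam * ∑ j, |x₀ j| + lam * ∑ j, |x' j|)/2 := by ring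
    rw [e1, e3] at hmid
    unfold lassoObj at hmid objeq
    have hQ : ∑ i, (A.mulVec x₀ i - A.mulVec x' i)^2 ≤ 0 := by linarith
    funext i
    have hnn : ∀ k ∈ Finset.univ, (0:ℝ) ≤ (A.mulVec x₀ k - A.mulVec x' k)^2 :=
      fun k _ => sq_nonneg _
    have hz : ∑ i, (A.mulVec x₀ i - A.mulVec x' i)^2 = 0 :=
      le_antisymm hQ (Finset.sum_nonneg hnn)
    have hti := (Finset.sum_eq_zero_iff_of_nonneg hnn).mp hz i (Finset.mem_univ i)
    have := pow_eq_zero_iff (n := 2) (by norm_num) |>.mp hti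
    have := sub_eq_zero.mp this
    linarith
  have qeq : ∑ i, (A.mulVec x' i - y i)^2 = ∑ i, (A.mulVec x₀ i - y i)^2 := by
    simp only [Aeq]
  have l1eq : ∑ j, |x' j| = ∑ j, |x₀ j| := by
    have hobj : lassoObj lam y A x' = lassoObj lam y A x₀ := objeq
    unfold lassoObj at hobj
    rw [qeq] at hobj
    have hml : lam * ∑ j, |x' j| = lam * ∑ j, |x₀ j| := by linarith
    exact mul_left_cancel₀ (ne_of_gt hlam) hml
  -- A is constant along the segment direction
  have hAd : ∀ t : ℝ, A.mulVec (fun j => x₀ j + t * (x' j - x₀ j)) = A.mulVec x₀ := by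
    intro t
    funext i
    simp only [Matrix.mulVec, dotProduct]
    have hsplit : ∀ j ∈ Finset.univ,
        A i j * (x₀ j + t * (x' j - x₀ j))
          = A i j * x₀ j + t * (A i j * x' j - A i j * x₀ j) := fun j _ => by ring
    rw [Finset.sum_congr rfl hsplit, Finset.sum_add_distrib, ← Finset.mul_sum,
      Finset.sum_sub_distrib]
    have hx : ∑ j, A i j * x' j = ∑ j, A i j * x₀ j := by
      have := congrFun Aeq i
      simpa [Matrix.mulVec, dotProduct] using this
    rw [hx]
    ring
  -- segment points are solutions
  have segSol : ∀ t : ℝ, 0 ≤ t → t ≤ 1 →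
      (fun j => x₀ j + t * (x' j - x₀ j)) ∈ lassoSol lam y A := by
    intro t ht0 ht1 z
    have hl1 : ∑ j, |x₀ j + t * (x' j - x₀ j)| ≤ ∑ j, |x₀ j| := by
      have hper : ∀ j ∈ Finset.univ,
          |x₀ j + t * (x' j - x₀ j)| ≤ (1-t) * |x₀ j| + t * |x' j| := by
        intro j _
        have hrw : x₀ j + t * (x' j - x₀ j) = (1-t) * x₀ j + t * x' j := by ring
        rw [hrw]
        calc |(1-t) * x₀ j + t * x' j| ≤ |(1-t) * x₀ j| + |t * x' j| := abs_add_le _ _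
          _ = (1-t) * |x₀ j| + t * |x' j| := by
              rw [abs_mul, abs_mul, abs_of_nonneg (by linarith : (0:ℝ) ≤ 1 - t),
                abs_of_nonneg ht0]
      calc ∑ j, |x₀ j + t * (x' j - x₀ j)|
          ≤ ∑ j, ((1-t) * |x₀ j| + t * |x' j|) := Finset.sum_le_sum hper
        _ = (1-t) * ∑ j, |x₀ j| + t * ∑ j, |x' j| := by
            rw [Finset.sum_add_distrib, ← Finset.mul_sum, ← Finset.mul_sum]
        _ = ∑ j, |x₀ j| := by rw [l1eq]; ring
    have hle : lassoObj lam y A (fun j => x₀ j + t * (x' j - x₀ j))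
        ≤ lassoObj lam y A x₀ := by
      unfold lassoObj
      simp only [hAd t]
      have := mul_le_mul_of_nonneg_left hl1 (le_of_lt hlam)
      linarith
    exact le_trans hle (hx₀ z)
  -- same signs on the common support
  have hsign : ∀ j, x₀ j ≠ 0 → 0 < x₀ j * x' j := by
    intro j hj
    have hx'j : x' j ≠ 0 := fun hc => hj ((hsupp' j).mpr hc)
    have hne0 : x₀ j * x' j ≠ 0 := mul_ne_zero hj hx'j
    rcases Ne.lt_or_gt hne0 with hneg|hpos
    · exfalso
      have hden : x₀ j - x' j ≠ 0 := by
        intro hc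
        rw [sub_eq_zero] at hc
        rw [hc] at hneg
        nlinarith [sq_nonneg (x' j)]
      set t := x₀ j / (x₀ j - x' j) with htdef
      have hts : t = (x₀ j * (x₀ j - x' j)) / (x₀ j - x' j)^2 := by
        rw [htdef]; field_simp
      have ht0 : 0 ≤ t := by
        rw [hts]
        apply div_nonneg _ (sq_nonneg _)
        nlinarith [sq_nonneg (x₀ j)]
      have hts1 : 1 - t = (-(x' j) * (x₀ j - x' j)) / (x₀ j - x' j)^2 := by
        rw [htdef]; field_simp; ring
      have ht1 : t ≤ 1 := by
        have hnn : 0 ≤ 1 - t := by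
          rw [hts1]
          apply div_nonneg _ (sq_nonneg _)
          nlinarith [sq_nonneg (x' j)]
        linarith
      have hw := segSol t ht0 ht1
      have hwj : x₀ j + t * (x' j - x₀ j) = 0 := by
        rw [htdef]; field_simp; ring
      have hmem : j ∈ Function.support x₀ := hj
      rw [hsupp x₀ hx₀ _ hw] at hmem
      exact hmem hwj
    · exact hpos
  -- sign vector
  set s : Fin N → ℝ := fun j => Real.sign (x₀ j) with hsdef
  have hs0 : ∀ j, s j * x₀ j = |x₀ j| := fun j => sign_mul_self_abs _
  have hs2 : ∀ j, x₀ j ≠ 0 → s j * s j = 1 := by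
    intro j hj
    rcases Ne.lt_or_gt (hj : x₀ j ≠ 0) with hlt|hgt
    · simp only [hsdef]; rw [Real.sign_of_neg hlt]; norm_num
    · simp only [hsdef]; rw [Real.sign_of_pos hgt]; norm_num
  have hsx' : ∀ j, s j * x' j = |x' j| := by
    intro j
    by_cases hj : x₀ j = 0
    · rw [(hsupp' j).mp hj]; simp
    · have hp := hsign j hj
      rcases Ne.lt_or_gt (hj : x₀ j ≠ 0) with hlt|hgt
      · have hx'neg : x' j < 0 := by nlinarith
        simp only [hsdef]
        rw [Real.sign_of_neg hlt, abs_of_neg hx'neg]; ring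
      · have hx'pos : 0 < x' j := by nlinarith
        simp only [hsdef]
        rw [Real.sign_of_pos hgt, abs_of_pos hx'pos]; ring
  have hsdsum : ∑ j, s j * (x' j - x₀ j) = 0 := by
    have hrw : ∀ j ∈ Finset.univ,
        s j * (x' j - x₀ j) = s j * x' j - s j * x₀ j := fun j _ => by ring
    rw [Finset.sum_congr rfl hrw, Finset.sum_sub_distrib,
      Finset.sum_congr rfl (fun j _ => hsx' j),
      Finset.sum_congr rfl (fun j (_ : j ∈ Finset.univ) => hs0 j), l1eq, sub_self]
  obtain ⟨j₁, hj₁⟩ := Function.ne_iff.mp hne'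
  -- the set of coordinates moving towards zero
  set T : Finset (Fin N) := Finset.univ.filter (fun j => s j * (x' j - x₀ j) < 0)
    with hTdef
  have hTmem : ∀ j, j ∈ T ↔ s j * (x' j - x₀ j) < 0 := by
    intro j
    rw [hTdef, Finset.mem_filter]
    simp
  have hTne : T.Nonempty := by
    by_contra hTe
    rw [Finset.not_nonempty_iff_eq_empty] at hTe
    have hnn : ∀ j ∈ Finset.univ, (0:ℝ) ≤ s j * (x' j - x₀ j) := by
      intro j _
      by_contra hc
      push_neg at hc
      have : j ∈ T := (hTmem j).mpr hc
      rw [hTe] at this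
      exact absurd this (Finset.notMem_empty j)
    have hj₁x₀ : x₀ j₁ ≠ 0 := by
      intro hc
      exact hj₁ (by rw [(hsupp' j₁).mp hc, hc])
    have hsne : s j₁ * (x' j₁ - x₀ j₁) ≠ 0 := by
      apply mul_ne_zero
      · simp only [hsdef]
        exact fun hc => hj₁x₀ (Real.sign_eq_zero_iff.mp hc)
      · exact sub_ne_zero.mpr hj₁
    have hpos : 0 < s j₁ * (x' j₁ - x₀ j₁) :=
      lt_of_le_of_ne (hnn j₁ (Finset.mem_univ _)) (Ne.symm hsne)
    have hsum := Finset.sum_pos' hnn ⟨j₁, Finset.mem_univ _, hpos⟩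
    rw [hsdsum] at hsum
    exact lt_irrefl 0 hsum
  have hTfacts : ∀ j ∈ T, s j * (x' j - x₀ j) < 0 := fun j hj => (hTmem j).mp hj
  have hTx₀ : ∀ j ∈ T, x₀ j ≠ 0 := by
    intro j hj hc
    have hf := hTfacts j hj
    simp only [hsdef] at hf
    rw [hc, Real.sign_zero, zero_mul] at hf
    exact lt_irrefl 0 hf
  have hTd : ∀ j ∈ T, x' j - x₀ j ≠ 0 := by
    intro j hj hc
    have hf := hTfacts j hj
    rw [hc, mul_zero] at hf
    exact lt_irrefl 0 hf
  -- the vanishing times are > 1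
  have h1lt : ∀ j ∈ T, 1 < -(x₀ j) / (x' j - x₀ j) := by
    intro j hj
    have hsd := hTfacts j hj
    have hx0 := hTx₀ j hj
    have hdne := hTd j hj
    have hsx0 : 0 < s j * x₀ j := by rw [hs0 j]; exact abs_pos.mpr hx0
    have hsxp : 0 < s j * x' j := by
      rw [hsx' j]
      exact abs_pos.mpr (fun hc => hx0 ((hsupp' j).mpr hc))
    have hs2j := hs2 j hx0
    have hid : (s j * x' j) * (s j * (x' j - x₀ j))
        = (s j * s j) * (x' j * (x' j - x₀ j)) := by ring
    have h5 := mul_neg_of_pos_of_neg hsxp hsd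
    rw [hid, hs2j, one_mul] at h5
    have hfrac : 0 < -(x' j) / (x' j - x₀ j) := by
      rcases mul_neg_iff.mp h5 with ⟨hp, hn⟩ | ⟨hn, hp⟩
      · exact div_pos_of_neg_of_neg (by linarith) hn
      · exact div_pos (by linarith) hp
    have hsplit : -(x₀ j) / (x' j - x₀ j) = 1 + -(x' j) / (x' j - x₀ j) := by
      field_simp
      ring
    rw [hsplit]
    linarith
  set tstar := T.inf' hTne (fun j => -(x₀ j) / (x' j - x₀ j)) with htsdef
  obtain ⟨js, hjsT, hjseq⟩ :=
    Finset.exists_mem_eq_inf' hTne (fun j => -(x₀ j) / (x' j - x₀ j))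
  have ht1 : 1 < tstar := by
    rw [htsdef, hjseq]
    exact h1lt js hjsT
  have hle : ∀ j ∈ T, tstar ≤ -(x₀ j) / (x' j - x₀ j) := by
    intro j hj
    rw [htsdef]
    exact Finset.inf'_le _ hj
  -- the shifted point has nonnegative signed coordinates
  have hnneg : ∀ j, 0 ≤ s j * (x₀ j + tstar * (x' j - x₀ j)) := by
    intro j
    by_cases hj0 : x₀ j = 0
    · rw [hj0, (hsupp' j).mp hj0]; simp
    · by_cases hjT : j ∈ T
      · have hsd := hTfacts j hjT
        have hdne := hTd j hjT
        have hkey : (-(x₀ j) / (x' j - x₀ j)) * (s j * (x' j - x₀ j))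
            = -(s j * x₀ j) := by
          field_simp
        have h3 := mul_le_mul_of_nonpos_right (hle j hjT) (le_of_lt hsd)
        have hexp : s j * (x₀ j + tstar * (x' j - x₀ j))
            = s j * x₀ j + tstar * (s j * (x' j - x₀ j)) := by ring
        rw [hexp]
        linarith [h3, hkey]
      · have hsdnn : 0 ≤ s j * (x' j - x₀ j) := by
          by_contra hc
          push_neg at hc
          exact hjT ((hTmem j).mpr hc)
        have hsx0 : 0 < s j * x₀ j := by rw [hs0 j]; exact abs_pos.mpr hj0
        have h4 : 0 ≤ tstar * (s j * (x' j - x₀ j)) :=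
          mul_nonneg (by linarith) hsdnn
        have hexp : s j * (x₀ j + tstar * (x' j - x₀ j))
            = s j * x₀ j + tstar * (s j * (x' j - x₀ j)) := by ring
        rw [hexp]
        linarith
  have habs : ∀ j, |x₀ j + tstar * (x' j - x₀ j)|
      = s j * (x₀ j + tstar * (x' j - x₀ j)) := by
    intro j
    by_cases hj0 : x₀ j = 0
    · rw [hj0, (hsupp' j).mp hj0]; simp
    · have hnn := hnneg j
      rcases Ne.lt_or_gt (hj0 : x₀ j ≠ 0) with hlt|hgt
      · have hsj : s j = -1 := by simp only [hsdef]; exact Real.sign_of_neg hlt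
        rw [hsj] at hnn ⊢
        rw [abs_of_nonpos (by linarith)]
        ring
      · have hsj : s j = 1 := by simp only [hsdef]; exact Real.sign_of_pos hgt
        rw [hsj] at hnn ⊢
        rw [abs_of_nonneg (by linarith)]
        ring
  have hl1w : ∑ j, |x₀ j + tstar * (x' j - x₀ j)| = ∑ j, |x₀ j| := by
    rw [Finset.sum_congr rfl (fun j (_ : j ∈ Finset.univ) => habs j)]
    have hrw : ∀ j ∈ Finset.univ, s j * (x₀ j + tstar * (x' j - x₀ j))
        = s j * x₀ j + tstar * (s j * (x' j - x₀ j)) := fun j _ => by ring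
    rw [Finset.sum_congr rfl hrw, Finset.sum_add_distrib, ← Finset.mul_sum,
      hsdsum, mul_zero, add_zero]
    exact Finset.sum_congr rfl (fun j _ => hs0 j)
  -- the shifted point is a solution
  have hwSol : (fun j => x₀ j + tstar * (x' j - x₀ j)) ∈ lassoSol lam y A := by
    intro z
    have heq : lassoObj lam y A (fun j => x₀ j + tstar * (x' j - x₀ j))
        = lassoObj lam y A x₀ := by
      unfold lassoObj
      simp only [hAd tstar]
      rw [hl1w]
    rw [heq]
    exact hx₀ z
  -- contradiction: coordinate js vanishes but is in the common support
  have hx0js : x₀ js ≠ 0 := hTx₀ js hjsT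
  have hdjs := hTd js hjsT
  have hwjs : x₀ js + tstar * (x' js - x₀ js) = 0 := by
    rw [htsdef, hjseq]
    field_simp
    ring
  have hmem : js ∈ Function.support x₀ := hx0js
  rw [hsupp x₀ hx₀ _ hwSol] at hmem
  exact hmem hwjs
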